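/- Fix an integer q ≥ 2 and for n ≥ 0 let c_n denote the number of 1-unbordered words of length n+1 over ℤ/qℤ whose first letter is q−2 (this number equals N_q(n,0), the number of short components of the tautological lamination at depth n). Then c_0 = 1, c_1 = q−2, c_{2n} = q·c_{2n−1} for all n ≥ 1, and c_{2n+1} = q·c_{2n} − 2·c_n for all n ≥ 0. -/

import Mathlib

/-- For a word `W` over `ℤ/qℤ`, `addOneFirst W` is the word `W'` obtained by adding `1`
to the first letter of `W` (and the empty word for the empty word). -/
def addOneFirst {q : ℕ} : List (ZMod q) → List (ZMod q)
  | [] => []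
  | x :: xs => (x + 1) :: xs

/-- A word `W` over `ℤ/qℤ` is 1-unbordered if no nonempty proper suffix of `W` is equal
to a prefix of `W` or to a prefix of `W'` (where `W'` is `W` with `1` added to its first
letter). -/
def OneUnbordered {q : ℕ} (W : List (ZMod q)) : Prop :=
  ∀ S : List (ZMod q), S ≠ [] → S.length < W.length → S <:+ W →
    ¬ S <+: W ∧ ¬ S <+: addOneFirst W

/-- `c n` is the number of 1-unbordered words of length `n+1` over `ℤ/qℤ` whose first
letter is `q − 2`; this is `N_q(n,0)`, the number of short components of the
tautological lamination at depth `n`. -/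
noncomputable def shortCount (q n : ℕ) : ℕ :=
  Nat.card {w : List (ZMod q) //
    w.length = n + 1 ∧ OneUnbordered w ∧ w.head? = some ((q - 2 : ℕ) : ZMod q)}

namespace SCaux

variable {q : ℕ}

@[simp] lemma addOneFirst_length (W : List (ZMod q)) : (addOneFirst W).length = W.length := by
  cases W <;> simp [addOneFirst]

lemma addOneFirst_getElem_pos (W : List (ZMod q)) (i : ℕ) (hi : 1 ≤ i)
    (h : i < (addOneFirst W).length) (h' : i < W.length) :
    (addOneFirst W)[i] = W[i] := by
  cases W with
  | nil => simp at h'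
  | cons x xs =>
    obtain ⟨j, rfl⟩ : ∃ j, i = j + 1 := ⟨i - 1, by omega⟩
    simp [addOneFirst]

lemma addOneFirst_drop_pos (W : List (ZMod q)) (i : ℕ) (hi : 1 ≤ i) :
    (addOneFirst W).drop i = W.drop i := by
  cases W with
  | nil => simp [addOneFirst]
  | cons x xs =>
    obtain ⟨j, rfl⟩ : ∃ j, i = j + 1 := ⟨i - 1, by omega⟩
    simp [addOneFirst]

/-- `Border W ℓ` : the suffix of length `ℓ` is a prefix of `W` or of `W'`. -/
def Border (W : List (ZMod q)) (ℓ : ℕ) : Prop :=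
  W.drop (W.length - ℓ) = W.take ℓ ∨ W.drop (W.length - ℓ) = (addOneFirst W).take ℓ

lemma oneUnbordered_iff (W : List (ZMod q)) :
    OneUnbordered W ↔ ∀ ℓ, 0 < ℓ → ℓ < W.length → ¬ Border W ℓ := by
  constructor
  · intro h ℓ hpos hlt hb
    have hdl : (W.drop (W.length - ℓ)).length = ℓ := by
      rw [List.length_drop]; omega
    have := h (W.drop (W.length - ℓ)) (by
        intro he; rw [he] at hdl; simp at hdl; omega)
      (by rw [hdl]; exact hlt) (List.drop_suffix _ _)
    rcases hb with hb | hb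
    · exact this.1 (hb ▸ List.take_prefix _ _)
    · exact this.2 (hb ▸ List.take_prefix _ _)
  · intro h S hne hlt hsuf
    obtain ⟨T, rfl⟩ := hsuf
    have hS : S = (T ++ S).drop ((T ++ S).length - S.length) := by
      simp
    have hpos : 0 < S.length := List.length_pos_iff.mpr hne
    constructor
    · intro hp
      refine h S.length hpos hlt (Or.inl ?_)
      rw [← hS]; exact (List.prefix_iff_eq_take.mp hp)
    · intro hp
      refine h S.length hpos hlt (Or.inr ?_)
      rw [← hS]; exact (List.prefix_iff_eq_take.mp hp)

lemma border_getElem {W : List (ZMod q)} {ℓ : ℕ} {P : List (ZMod q)}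
    (hP : P.length = W.length) (hℓ : ℓ ≤ W.length)
    (hb : W.drop (W.length - ℓ) = P.take ℓ) (j : ℕ) (hj : j < ℓ) :
    W[W.length - ℓ + j]'(by omega) = P[j]'(by omega) := by
  have := congrArg (fun L => L[j]?) hb
  simp only [List.getElem?_drop, List.getElem?_take] at this
  simp only [hj, if_pos] at this
  rw [List.getElem?_eq_getElem (by omega), List.getElem?_eq_getElem (by omega)] at this
  exact Option.some_injective _ this

lemma border_reduce_aux {W P : List (ZMod q)} {ℓ : ℕ} (hℓ : ℓ < W.length)
    (h2 : W.length < 2 * ℓ) (hP : P.length = W.length)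
    (hPW : ∀ i, 1 ≤ i → (hi : i < W.length) → P[i]'(by omega) = W[i])
    (hb : W.drop (W.length - ℓ) = P.take ℓ) :
    W.drop (W.length - (2 * ℓ - W.length)) = P.take (2 * ℓ - W.length) := by
  have hm : 0 < W.length := by omega
  set m := W.length with hm'
  apply List.ext_getElem
  · rw [List.length_drop, List.length_take]; omega
  · intro i h1 h2'
    have hi : i < 2 * ℓ - m := by rw [List.length_drop] at h1; omega
    have e1 : W[m - (2 * ℓ - m) + i]'(by omega) = P[m - ℓ + i]'(by omega) := by
      have := border_getElem hP (by omega) hb (m - ℓ + i) (by omega)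
      convert this using 2 <;> omega
    have e2 : P[m - ℓ + i]'(by omega) = W[m - ℓ + i]'(by omega) :=
      hPW _ (by omega) (by omega)
    have e3 : W[m - ℓ + i]'(by omega) = P[i]'(by omega) :=
      border_getElem hP (by omega) hb i (by omega)
    calc (W.drop (m - (2 * ℓ - m)))[i] = W[m - (2 * ℓ - m) + i]'(by omega) := by
          rw [List.getElem_drop]
      _ = P[i]'(by omega) := by rw [e1, e2, e3]
      _ = (P.take (2 * ℓ - m))[i] := by rw [List.getElem_take]

lemma border_reduce {W : List (ZMod q)} {ℓ : ℕ} (hℓ : ℓ < W.length)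
    (h2 : W.length < 2 * ℓ) (hb : Border W ℓ) : Border W (2 * ℓ - W.length) := by
  rcases hb with hb | hb
  · exact Or.inl (border_reduce_aux hℓ h2 rfl (fun i _ hi => rfl) hb)
  · refine Or.inr (border_reduce_aux hℓ h2 (by simp) ?_ hb)
    intro i h1 hi
    exact addOneFirst_getElem_pos W i h1 (by simp [hi]) hi

/-- no border of length between 1 and k -/
def NoBorderLE (W : List (ZMod q)) (k : ℕ) : Prop :=
  ∀ ℓ, 0 < ℓ → ℓ ≤ k → ¬ Border W ℓ

lemma oneUnbordered_iff_noBorderLE {W : List (ZMod q)} (hW : W ≠ []) :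
    OneUnbordered W ↔ NoBorderLE W (W.length / 2) := by
  have hm : 0 < W.length := List.length_pos_iff.mpr hW
  rw [oneUnbordered_iff]
  constructor
  · intro h ℓ hpos hle
    exact h ℓ hpos (by omega)
  · intro h ℓ
    induction ℓ using Nat.strong_induction_on with
    | _ ℓ IH =>
      intro hpos hlt hb
      by_cases hc : ℓ ≤ W.length / 2
      · exact h ℓ hpos hc hb
      · exact IH (2 * ℓ - W.length) (by omega) (by omega) (by omega)
          (border_reduce hlt (by omega) hb)



lemma ins_length (v : List (ZMod q)) (x : ZMod q) (p : ℕ) (hp : p ≤ v.length) :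
    (v.take p ++ x :: v.drop p).length = v.length + 1 := by
  simp; omega

lemma ins_take (v : List (ZMod q)) (x : ZMod q) (p ℓ : ℕ) (hp : p ≤ v.length)
    (hℓ : ℓ ≤ p) : (v.take p ++ x :: v.drop p).take ℓ = v.take ℓ := by
  rw [List.take_append]
  have h1 : ℓ - (v.take p).length = 0 := by simp; omega
  rw [h1, List.take_take, List.take_zero, List.append_nil, min_eq_left hℓ]

lemma ins_drop (v : List (ZMod q)) (x : ZMod q) (p ℓ : ℕ) (hp : p ≤ v.length)
    (hℓ : ℓ ≤ v.length - p) :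
    (v.take p ++ x :: v.drop p).drop (v.length + 1 - ℓ) = v.drop (v.length - ℓ) := by
  rw [List.drop_append]
  have h1 : (v.take p).drop (v.length + 1 - ℓ) = [] := by
    apply List.drop_eq_nil_of_le; simp; omega
  have h2 : v.length + 1 - ℓ - (v.take p).length = (v.length - ℓ - p) + 1 := by
    simp; omega
  rw [h1, h2, List.nil_append, List.drop_succ_cons, List.drop_drop]
  congr 1; omega

lemma ins_addOneFirst (v : List (ZMod q)) (x : ZMod q) (p : ℕ) (hv : v ≠ [])
    (hp : 1 ≤ p) :
    addOneFirst (v.take p ++ x :: v.drop p)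
      = (addOneFirst v).take p ++ x :: (addOneFirst v).drop p := by
  cases v with
  | nil => exact absurd rfl hv
  | cons y ys =>
    obtain ⟨r, rfl⟩ : ∃ r, p = r + 1 := ⟨p - 1, by omega⟩
    simp [addOneFirst]

lemma ins_head (v : List (ZMod q)) (x : ZMod q) (p : ℕ) (hv : v ≠ [])
    (hp : 1 ≤ p) : (v.take p ++ x :: v.drop p).head? = v.head? := by
  cases v with
  | nil => exact absurd rfl hv
  | cons y ys =>
    obtain ⟨r, rfl⟩ : ∃ r, p = r + 1 := ⟨p - 1, by omega⟩
    simp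

lemma ins_border_iff (v : List (ZMod q)) (x : ZMod q) (p k ℓ : ℕ) (hv : v ≠ [])
    (hp : 1 ≤ p) (hkp : k ≤ p) (hpk : p + k ≤ v.length)
    (hℓ1 : 0 < ℓ) (hℓ : ℓ ≤ k) :
    Border (v.take p ++ x :: v.drop p) ℓ ↔ Border v ℓ := by
  have hpv : p ≤ v.length := by omega
  have hL : (v.take p ++ x :: v.drop p).length = v.length + 1 :=
    ins_length v x p hpv
  have hav : addOneFirst v ≠ [] := by
    cases v
    · exact absurd rfl hv
    · simp [addOneFirst]
  unfold Border
  rw [hL, ins_drop v x p ℓ hpv (by omega), ins_take v x p ℓ hpv (by omega),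
    ins_addOneFirst v x p hv hp,
    ins_take (addOneFirst v) x p ℓ (by simp; omega) (by omega)]

lemma ins_noBorderLE_iff (v : List (ZMod q)) (x : ZMod q) (p k : ℕ) (hv : v ≠ [])
    (hp : 1 ≤ p) (hkp : k ≤ p) (hpk : p + k ≤ v.length) :
    NoBorderLE (v.take p ++ x :: v.drop p) k ↔ NoBorderLE v k := by
  unfold NoBorderLE
  constructor
  · intro h ℓ h1 h2 hb
    exact h ℓ h1 h2 ((ins_border_iff v x p k ℓ hv hp hkp hpk h1 h2).mpr hb)
  · intro h ℓ h1 h2 hb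
    exact h ℓ h1 h2 ((ins_border_iff v x p k ℓ hv hp hkp hpk h1 h2).mp hb)


lemma addOneFirst_take (w : List (ZMod q)) (L : ℕ) (hL : 1 ≤ L) :
    (addOneFirst w).take L = addOneFirst (w.take L) := by
  cases w with
  | nil => simp [addOneFirst]
  | cons y ys =>
    obtain ⟨r, rfl⟩ : ∃ r, L = r + 1 := ⟨L - 1, by omega⟩
    simp [addOneFirst]

lemma addOneFirst_append (U V : List (ZMod q)) (hU : U ≠ []) :
    addOneFirst (U ++ V) = addOneFirst U ++ V := by
  cases U with
  | nil => exact absurd rfl hU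
  | cons y ys => simp [addOneFirst]

lemma dbl_take (U V : List (ZMod q)) (ℓ : ℕ) (hℓ : ℓ ≤ U.length) :
    (U ++ V).take ℓ = U.take ℓ := by
  rw [List.take_append]
  have : ℓ - U.length = 0 := by omega
  rw [this, List.take_zero, List.append_nil]

lemma dbl_drop (U V : List (ZMod q)) (ℓ : ℕ) (hV : V.length = U.length)
    (hℓ : ℓ ≤ U.length) :
    (U ++ V).drop ((U ++ V).length - ℓ) = V.drop (U.length - ℓ) := by
  rw [List.drop_append]
  have h1 : U.drop ((U ++ V).length - ℓ) = [] := by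
    apply List.drop_eq_nil_of_le; simp; omega
  rw [h1, List.nil_append]
  congr 1
  simp; omega

lemma dbl_border_iff (U V : List (ZMod q)) (ℓ : ℕ) (hU : U ≠ [])
    (hV : V.length = U.length) (hVd : ∀ i, 1 ≤ i → V.drop i = U.drop i)
    (hℓ1 : 0 < ℓ) (hℓ : ℓ + 1 ≤ U.length) :
    Border (U ++ V) ℓ ↔ Border U ℓ := by
  unfold Border
  rw [dbl_drop U V ℓ hV (by omega), hVd _ (by omega),
    dbl_take U V ℓ (by omega), addOneFirst_append U V hU,
    dbl_take (addOneFirst U) V ℓ (by simp; omega)]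

lemma dbl_border_half (U V : List (ZMod q)) (hU : U ≠ [])
    (hV : V = U ∨ V = addOneFirst U) :
    Border (U ++ V) U.length := by
  have hVL : V.length = U.length := by rcases hV with rfl | rfl; rfl; simp
  have hdrop : (U ++ V).drop ((U ++ V).length - U.length) = V := by
    rw [dbl_drop U V U.length hVL le_rfl]; simp
  have htake : (U ++ V).take U.length = U := by
    rw [dbl_take U V U.length le_rfl]; simp
  unfold Border
  rw [hdrop, htake, addOneFirst_append U V hU,
    dbl_take (addOneFirst U) V U.length (by simp)]
  rcases hV with rfl | rfl
  · exact Or.inl rfl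
  · exact Or.inr (by simp)

lemma half_structure (w : List (ZMod q)) (L : ℕ) (hL : 1 ≤ L)
    (hw : w.length = 2 * L) (hb : Border w L) :
    w = w.take L ++ w.take L ∨ w = w.take L ++ addOneFirst (w.take L) := by
  have hsplit : w = w.take L ++ w.drop L := (List.take_append_drop L w).symm
  have hdrop : w.drop (w.length - L) = w.drop L := by congr 1; omega
  unfold Border at hb
  rw [hdrop, addOneFirst_take w L hL] at hb
  rcases hb with hb | hb
  · left; conv_lhs => rw [hsplit]
    rw [hb]
  · right; conv_lhs => rw [hsplit]
    rw [hb]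

lemma finite_aux [NeZero q] (P : List (ZMod q) → Prop) (m : ℕ) :
    Finite {w : List (ZMod q) // w.length = m ∧ P w} := by
  have hfin := (List.finite_length_eq (ZMod q) m).to_subtype
  apply Finite.of_injective
    (fun w : {w : List (ZMod q) // w.length = m ∧ P w} =>
      (⟨w.1, w.2.1⟩ : {l : List (ZMod q) | l.length = m}))
  intro w₁ w₂ h
  have h2 : w₁.1 = w₂.1 := congrArg (fun z : {l : List (ZMod q) | l.length = m} => z.1) h
  exact Subtype.ext h2

lemma era_ins (w : List (ZMod q)) (p : ℕ) (hp : p < w.length) :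
    (w.take p ++ w.drop (p + 1)).take p ++
      w[p] :: (w.take p ++ w.drop (p + 1)).drop p = w := by
  have hlen : (w.take p).length = p := by simp; omega
  have h1 : (w.take p ++ w.drop (p + 1)).take p = w.take p := by
    rw [List.take_append, hlen, Nat.sub_self, List.take_zero,
      List.append_nil, List.take_take, min_self]
  have h2 : (w.take p ++ w.drop (p + 1)).drop p = w.drop (p + 1) := by
    rw [List.drop_append, hlen, Nat.sub_self, List.drop_zero,
      List.drop_take, Nat.sub_self, List.take_zero, List.nil_append]
  rw [h1, h2, ← List.drop_eq_getElem_cons hp, List.take_append_drop]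

lemma ins_era (v : List (ZMod q)) (x : ZMod q) (p : ℕ) (hp : p ≤ v.length) :
    (v.take p ++ x :: v.drop p).take p ++ (v.take p ++ x :: v.drop p).drop (p + 1)
      = v := by
  have hlen : (v.take p).length = p := by simp; omega
  have h1 : (v.take p ++ x :: v.drop p).take p = v.take p := ins_take v x p p hp le_rfl
  have h2 : (v.take p ++ x :: v.drop p).drop (p + 1) = v.drop p := by
    rw [List.drop_append, hlen]
    have : (v.take p).drop (p+1) = [] := by
      apply List.drop_eq_nil_of_le; omega
    rw [this, List.nil_append]
    have : p + 1 - p = 1 := by omega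
    rw [this, List.drop_succ_cons, List.drop_zero]
  rw [h1, h2, List.take_append_drop]

lemma ins_getElem (v : List (ZMod q)) (x : ZMod q) (p : ℕ) (hp : p ≤ v.length)
    (h : p < (v.take p ++ x :: v.drop p).length) :
    (v.take p ++ x :: v.drop p)[p] = x := by
  have hlen : (v.take p).length = p := by simp; omega
  have hd : (v.take p ++ x :: v.drop p).drop p = x :: v.drop p := by
    rw [List.drop_append, hlen, Nat.sub_self, List.drop_zero]
    have : (v.take p).drop p = [] := by apply List.drop_eq_nil_of_le; omega
    rw [this, List.nil_append]
  have := List.drop_eq_getElem_cons h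
  rw [hd] at this
  exact (List.cons.injEq _ _ _ _ ▸ this).1.symm

lemma head?_take (w : List (ZMod q)) (ℓ : ℕ) (hℓ : 1 ≤ ℓ) :
    (w.take ℓ).head? = w.head? := by
  cases w with
  | nil => simp
  | cons y ys =>
    obtain ⟨r, rfl⟩ : ∃ r, ℓ = r + 1 := ⟨ℓ - 1, by omega⟩
    simp

lemma head?_append (U V : List (ZMod q)) (hU : U ≠ []) :
    (U ++ V).head? = U.head? := by
  cases U with
  | nil => exact absurd rfl hU
  | cons y ys => simp

lemma card_insert [NeZero q] (a : ZMod q) (m p k : ℕ) (hp : 1 ≤ p) (hkp : k ≤ p)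
    (hpk : p + k ≤ m) :
    Nat.card {w : List (ZMod q) //
        w.length = m + 1 ∧ NoBorderLE w k ∧ w.head? = some a}
      = Nat.card {v : List (ZMod q) //
          v.length = m ∧ NoBorderLE v k ∧ v.head? = some a} * q := by
  have hEquiv : {w : List (ZMod q) //
        w.length = m + 1 ∧ NoBorderLE w k ∧ w.head? = some a}
      ≃ {v : List (ZMod q) //
          v.length = m ∧ NoBorderLE v k ∧ v.head? = some a} × ZMod q := by
    refine ⟨fun w => (⟨w.1.take p ++ w.1.drop (p + 1), ?_⟩, w.1[p]'(by have := w.2.1; omega)), 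
      fun vx => ⟨vx.1.1.take p ++ vx.2 :: vx.1.1.drop p, ?_⟩, ?_, ?_⟩
    · obtain ⟨w, hlen, hnb, hhd⟩ := w
      have hpw : p < w.length := by omega
      have hri := era_ins w p hpw
      set v := w.take p ++ w.drop (p + 1) with hv
      have hvlen : v.length = m := by simp [hv]; omega
      have hvne : v ≠ [] := by
        intro h; rw [h] at hvlen; simp at hvlen; omega
      refine ⟨hvlen, ?_, ?_⟩
      · have := (ins_noBorderLE_iff v (w[p]'hpw) p k hvne hp hkp (by omega)).mp
        rw [hri] at this
        exact this hnb
      · have := ins_head v (w[p]'hpw) p hvne hp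
        rw [hri] at this
        rw [← this, hhd]
    · obtain ⟨⟨v, hlen, hnb, hhd⟩, x⟩ := vx
      have hvne : v ≠ [] := by
        intro h; rw [h] at hlen; simp at hlen; omega
      refine ⟨by rw [ins_length v x p (by omega)]; omega,
        (ins_noBorderLE_iff v x p k hvne hp hkp (by omega)).mpr hnb,
        by rw [ins_head v x p hvne hp]; exact hhd⟩
    · intro w
      apply Subtype.ext
      exact era_ins w.1 p (by have := w.2.1; omega)
    · intro vx
      obtain ⟨⟨v, hlen, hnb, hhd⟩, x⟩ := vx
      have hpv : p ≤ v.length := by omega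
      refine Prod.ext (Subtype.ext ?_) ?_
      · exact ins_era v x p hpv
      · exact ins_getElem v x p hpv _
  rw [Nat.card_congr hEquiv, Nat.card_prod, Nat.card_zmod]

lemma noBorderLE_succ_iff (W : List (ZMod q)) (k : ℕ) :
    NoBorderLE W (k + 1) ↔ NoBorderLE W k ∧ ¬ Border W (k + 1) := by
  constructor
  · intro h
    exact ⟨fun ℓ h1 h2 => h ℓ h1 (by omega), h (k + 1) (by omega) le_rfl⟩
  · rintro ⟨h1, h2⟩ ℓ hp hle hb
    rcases Nat.lt_or_ge ℓ (k + 1) with hc | hc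
    · exact h1 ℓ hp (by omega) hb
    · have : ℓ = k + 1 := by omega
      exact h2 (this ▸ hb)

lemma card_split [NeZero q] (a : ZMod q) (m k : ℕ) :
    Nat.card {w : List (ZMod q) //
        w.length = m ∧ NoBorderLE w k ∧ w.head? = some a}
      = Nat.card {w : List (ZMod q) //
          w.length = m ∧ NoBorderLE w (k + 1) ∧ w.head? = some a}
        + Nat.card {w : List (ZMod q) //
            w.length = m ∧ (NoBorderLE w k ∧ Border w (k + 1)) ∧ w.head? = some a} := by
  classical
  haveI := finite_aux (q := q) (fun w => NoBorderLE w (k + 1) ∧ w.head? = some a) m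
  haveI := finite_aux (q := q)
    (fun w => (NoBorderLE w k ∧ Border w (k + 1)) ∧ w.head? = some a) m
  rw [← Nat.card_sum]
  apply Nat.card_congr
  refine ⟨fun x => if h : Border x.1 (k + 1) then
      Sum.inr ⟨x.1, x.2.1, ⟨x.2.2.1, h⟩, x.2.2.2⟩
    else Sum.inl ⟨x.1, x.2.1, (noBorderLE_succ_iff x.1 k).mpr ⟨x.2.2.1, h⟩, x.2.2.2⟩,
    fun y => y.elim
      (fun z => ⟨z.1, z.2.1, ((noBorderLE_succ_iff z.1 k).mp z.2.2.1).1, z.2.2.2⟩)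
      (fun z => ⟨z.1, z.2.1, z.2.2.1.1, z.2.2.2⟩), ?_, ?_⟩
  · intro x
    by_cases h : Border x.1 (k + 1)
    · dsimp only
      rw [dif_pos h]
      rfl
    · dsimp only
      rw [dif_neg h]
      rfl
  · intro y
    rcases y with z | z
    · have hnb : ¬ Border z.1 (k + 1) :=
        ((noBorderLE_succ_iff z.1 k).mp z.2.2.1).2
      simp only [Sum.elim_inl]
      exact dif_neg hnb
    · have hb : Border z.1 (k + 1) := z.2.2.1.2
      simp only [Sum.elim_inr]
      exact dif_pos hb

lemma addOneFirst_ne (hq : 2 ≤ q) (U : List (ZMod q)) (hU : U ≠ []) :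
    addOneFirst U ≠ U := by
  cases U with
  | nil => exact absurd rfl hU
  | cons y ys =>
    simp only [addOneFirst, ne_eq, List.cons.injEq, not_and]
    intro h
    haveI : Fact (1 < q) := ⟨hq⟩
    exact absurd (by linear_combination h) (one_ne_zero (α := ZMod q))

lemma take_append_len (U V : List (ZMod q)) (L : ℕ) (hU : U.length = L) :
    (U ++ V).take L = U := by
  rw [← hU, List.take_left]

lemma drop_append_len (U V : List (ZMod q)) (L : ℕ) (hU : U.length = L) :
    (U ++ V).drop L = V := by
  rw [← hU, List.drop_left]

lemma card_double [NeZero q] (hq : 2 ≤ q) (a : ZMod q) (n : ℕ) :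
    Nat.card {w : List (ZMod q) //
        w.length = 2 * n + 2 ∧ (NoBorderLE w n ∧ Border w (n + 1)) ∧ w.head? = some a}
      = Nat.card {U : List (ZMod q) //
          U.length = n + 1 ∧ NoBorderLE U n ∧ U.head? = some a} * 2 := by
  classical
  have hVprops : ∀ (U V : List (ZMod q)), U.length = n + 1 →
      (V = U ∨ V = addOneFirst U) →
      (U ++ V).length = 2 * n + 2 ∧ (NoBorderLE (U ++ V) n ↔ NoBorderLE U n) ∧
        Border (U ++ V) (n + 1) ∧ (U ++ V).head? = U.head? := by
    intro U V hU hV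
    have hUne : U ≠ [] := by intro h; rw [h] at hU; simp at hU
    have hVlen : V.length = U.length := by
      rcases hV with rfl | rfl
      · rfl
      · simp
    have hVd : ∀ i, 1 ≤ i → V.drop i = U.drop i := by
      intro i hi
      rcases hV with rfl | rfl
      · rfl
      · exact addOneFirst_drop_pos U i hi
    refine ⟨by rw [List.length_append, hVlen, hU]; omega, ?_, ?_, head?_append U V hUne⟩
    · constructor
      · intro h ℓ h1 h2 hb
        exact h ℓ h1 h2 ((dbl_border_iff U V ℓ hUne hVlen hVd h1 (by omega)).mpr hb)
      · intro h ℓ h1 h2 hb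
        exact h ℓ h1 h2 ((dbl_border_iff U V ℓ hUne hVlen hVd h1 (by omega)).mp hb)
    · have := dbl_border_half U V hUne hV
      rwa [hU] at this
  have hstruct : ∀ w : List (ZMod q), w.length = 2 * n + 2 → Border w (n + 1) →
      w = w.take (n + 1) ++ w.take (n + 1) ∨
        w = w.take (n + 1) ++ addOneFirst (w.take (n + 1)) :=
    fun w hw hb => half_structure w (n + 1) (by omega) (by omega) hb
  have mem1 : ∀ w : List (ZMod q), w.length = 2 * n + 2 →
      (NoBorderLE w n ∧ Border w (n + 1)) → w.head? = some a →
      (w.take (n + 1)).length = n + 1 ∧ NoBorderLE (w.take (n + 1)) n ∧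
        (w.take (n + 1)).head? = some a := by
    intro w hlen hnbd hhd
    obtain ⟨hnb, hbd⟩ := hnbd
    have hUlen : (w.take (n + 1)).length = n + 1 := by
      rw [List.length_take]; omega
    refine ⟨hUlen, ?_, by rw [head?_take w (n + 1) (by omega)]; exact hhd⟩
    rcases hstruct w hlen hbd with hc | hc
    · have h2 := (hVprops _ _ hUlen (Or.inl rfl)).2.1
      rw [← hc] at h2
      exact h2.mp hnb
    · have h2 := (hVprops _ _ hUlen (Or.inr rfl)).2.1
      rw [← hc] at h2
      exact h2.mp hnb
  have mem2 : ∀ (U : List (ZMod q)) (b : Bool), U.length = n + 1 → NoBorderLE U n →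
      U.head? = some a →
      (U ++ (if b then U else addOneFirst U)).length = 2 * n + 2 ∧
        (NoBorderLE (U ++ (if b then U else addOneFirst U)) n ∧
          Border (U ++ (if b then U else addOneFirst U)) (n + 1)) ∧
        (U ++ (if b then U else addOneFirst U)).head? = some a := by
    intro U b hUlen hnb hhd
    have hV : (if b then U else addOneFirst U) = U ∨
        (if b then U else addOneFirst U) = addOneFirst U := by
      cases b
      · exact Or.inr rfl
      · exact Or.inl rfl
    obtain ⟨h1, h2, h3, h4⟩ := hVprops U _ hUlen hV
    exact ⟨h1, ⟨h2.mpr hnb, h3⟩, by rw [h4]; exact hhd⟩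
  have hE : {w : List (ZMod q) //
        w.length = 2 * n + 2 ∧ (NoBorderLE w n ∧ Border w (n + 1)) ∧ w.head? = some a}
      ≃ {U : List (ZMod q) //
          U.length = n + 1 ∧ NoBorderLE U n ∧ U.head? = some a} × Bool := by
    refine ⟨fun w => (⟨w.1.take (n + 1), mem1 w.1 w.2.1 w.2.2.1 w.2.2.2⟩,
        decide (w.1.drop (n + 1) = w.1.take (n + 1))),
      fun Ub => ⟨Ub.1.1 ++ (if Ub.2 then Ub.1.1 else addOneFirst Ub.1.1),
        mem2 Ub.1.1 Ub.2 Ub.1.2.1 Ub.1.2.2.1 Ub.1.2.2.2⟩, ?_, ?_⟩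
    · -- left inverse : invFun (toFun w) = w
      rintro ⟨w, hlen, ⟨hnb, hbd⟩, hhd⟩
      apply Subtype.ext
      dsimp only
      have hUlen : (w.take (n + 1)).length = n + 1 := by
        rw [List.length_take]; omega
      have hUne : w.take (n + 1) ≠ [] := by
        intro h; rw [h] at hUlen; simp at hUlen
      rcases hstruct w hlen hbd with hc | hc
      · have hdrop : w.drop (n + 1) = w.take (n + 1) := by
          conv_lhs => rw [hc]
          exact drop_append_len _ _ _ hUlen
        simp only [hdrop]
        have hd : decide (w.take (n + 1) = w.take (n + 1)) = true := decide_eq_true rfl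
        simp only [decide_true, ↓reduceIte]
        exact hc.symm
      · have hdrop : w.drop (n + 1) = addOneFirst (w.take (n + 1)) := by
          conv_lhs => rw [hc]
          exact drop_append_len _ _ _ hUlen
        simp only [hdrop]
        have hd : decide (addOneFirst (w.take (n + 1)) = w.take (n + 1)) = false := by
          simp only [decide_eq_false_iff_not]
          exact addOneFirst_ne hq _ hUne
        rw [hd, if_neg (by simp)]
        exact hc.symm
    · -- right inverse
      rintro ⟨⟨U, hUlen, hnb, hhd⟩, b⟩
      have hUne : U ≠ [] := by intro h; rw [h] at hUlen; simp at hUlen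
      cases b
      · refine Prod.ext (Subtype.ext ?_) ?_
        · dsimp only
          rw [if_neg (by simp)]
          exact take_append_len _ _ _ hUlen
        · dsimp only
          simp only [Bool.false_eq_true, ↓reduceIte, drop_append_len _ _ _ hUlen,
            take_append_len _ _ _ hUlen]
          simp [addOneFirst_ne hq U hUne]
      · refine Prod.ext (Subtype.ext ?_) ?_
        · dsimp only
          rw [if_pos rfl]
          exact take_append_len _ _ _ hUlen
        · dsimp only
          simp only [↓reduceIte, drop_append_len _ _ _ hUlen,
            take_append_len _ _ _ hUlen]
          simp
  have hb2 : Nat.card Bool = 2 := by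
    rw [Nat.card_eq_fintype_card]; rfl
  rw [Nat.card_congr hE, Nat.card_prod, hb2]

lemma shortCount_eq_half [NeZero q] (n : ℕ) :
    shortCount q n = Nat.card {w : List (ZMod q) //
      w.length = n + 1 ∧ NoBorderLE w ((n + 1) / 2) ∧
        w.head? = some ((q - 2 : ℕ) : ZMod q)} := by
  unfold shortCount
  apply Nat.card_congr
  apply Equiv.subtypeEquivRight
  intro w
  constructor
  · rintro ⟨h1, h2, h3⟩
    have hne : w ≠ [] := by intro h; rw [h] at h1; simp at h1
    refine ⟨h1, ?_, h3⟩
    have := (oneUnbordered_iff_noBorderLE hne).mp h2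
    rwa [h1] at this
  · rintro ⟨h1, h2, h3⟩
    have hne : w ≠ [] := by intro h; rw [h] at h1; simp at h1
    refine ⟨h1, ?_, h3⟩
    apply (oneUnbordered_iff_noBorderLE hne).mpr
    rwa [h1]

lemma shortCount_eq_full [NeZero q] (n : ℕ) :
    shortCount q n = Nat.card {w : List (ZMod q) //
      w.length = n + 1 ∧ NoBorderLE w n ∧
        w.head? = some ((q - 2 : ℕ) : ZMod q)} := by
  unfold shortCount
  apply Nat.card_congr
  apply Equiv.subtypeEquivRight
  intro w
  constructor
  · rintro ⟨h1, h2, h3⟩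
    refine ⟨h1, ?_, h3⟩
    intro ℓ hp hle hb
    exact (oneUnbordered_iff w).mp h2 ℓ hp (by omega) hb
  · rintro ⟨h1, h2, h3⟩
    refine ⟨h1, ?_, h3⟩
    apply (oneUnbordered_iff w).mpr
    intro ℓ hp hlt hb
    exact h2 ℓ hp (by omega) hb

lemma shortCount_zero [NeZero q] : shortCount q 0 = 1 := by
  unfold shortCount
  have hunb : OneUnbordered ([((q - 2 : ℕ) : ZMod q)] : List (ZMod q)) := by
    intro S hne hlt
    exfalso
    have h1 := List.length_pos_iff.mpr hne
    simp only [List.length_cons, List.length_nil] at hlt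
    omega
  have hE : {w : List (ZMod q) //
      w.length = 0 + 1 ∧ OneUnbordered w ∧ w.head? = some ((q - 2 : ℕ) : ZMod q)}
      ≃ PUnit.{1} := by
    refine ⟨fun _ => PUnit.unit,
      fun _ => ⟨[((q - 2 : ℕ) : ZMod q)], by simp, hunb, by simp⟩, ?_, fun _ => rfl⟩
    rintro ⟨w, h1, h2, h3⟩
    apply Subtype.ext
    dsimp only
    match w, h1 with
    | [y], _ =>
      simp only [List.head?_cons, Option.some.injEq] at h3
      rw [h3]
  rw [Nat.card_congr hE]
  simp

lemma shortCount_odd [NeZero q] (hq : 2 ≤ q) (n : ℕ) :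
    q * shortCount q (2 * n) = shortCount q (2 * n + 1) + 2 * shortCount q n := by
  set a : ZMod q := ((q - 2 : ℕ) : ZMod q) with ha
  have e1 : shortCount q (2 * n + 1) = Nat.card {w : List (ZMod q) //
      w.length = 2 * n + 2 ∧ NoBorderLE w (n + 1) ∧ w.head? = some a} := by
    rw [shortCount_eq_half]
    rw [show (2 * n + 1 + 1) = 2 * n + 2 from by omega,
      show (2 * n + 2) / 2 = n + 1 from by omega]
  have e2 := card_split (q := q) a (2 * n + 2) n
  have e3 := card_insert (q := q) a (2 * n + 1) (n + 1) n (by omega) (by omega) (by omega)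
  rw [show (2 * n + 1 + 1) = 2 * n + 2 from by omega] at e3
  have e4 : shortCount q (2 * n) = Nat.card {w : List (ZMod q) //
      w.length = 2 * n + 1 ∧ NoBorderLE w n ∧ w.head? = some a} := by
    rw [shortCount_eq_half]
    rw [show (2 * n + 1) / 2 = n from by omega]
  have e5 := card_double (q := q) hq a n
  have e6 := shortCount_eq_full (q := q) n
  rw [show (n + 1) = n + 1 from rfl] at e6
  calc q * shortCount q (2 * n)
      = Nat.card {w : List (ZMod q) //
          w.length = 2 * n + 1 ∧ NoBorderLE w n ∧ w.head? = some a} * q := by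
        rw [e4, mul_comm]
    _ = Nat.card {w : List (ZMod q) //
          w.length = 2 * n + 2 ∧ NoBorderLE w n ∧ w.head? = some a} := e3.symm
    _ = shortCount q (2 * n + 1) + 2 * shortCount q n := by
        rw [e2, ← e1, e5, ← e6]; ring

end SCaux

open SCaux

/-- For `q ≥ 2`, the counts `c n = N_q(n,0)` satisfy `c 0 = 1`, `c 1 = q − 2`,
`c (2n) = q·c (2n−1)` for `n ≥ 1`, and `c (2n+1) = q·c (2n) − 2·c n` for `n ≥ 0`. -/
theorem shortCount_recursion (q : ℕ) (hq : 2 ≤ q) :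
    shortCount q 0 = 1 ∧
    (shortCount q 1 : ℤ) = q - 2 ∧
    (∀ n : ℕ, 1 ≤ n → shortCount q (2 * n) = q * shortCount q (2 * n - 1)) ∧
    (∀ n : ℕ,
      (shortCount q (2 * n + 1) : ℤ) = q * shortCount q (2 * n) - 2 * shortCount q n) := by
  haveI : NeZero q := ⟨by omega⟩
  set a : ZMod q := ((q - 2 : ℕ) : ZMod q) with ha
  have hodd : ∀ n : ℕ,
      (shortCount q (2 * n + 1) : ℤ) = q * shortCount q (2 * n) - 2 * shortCount q n := by
    intro n
    have := shortCount_odd (q := q) hq n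
    have hcast : (q : ℤ) * (shortCount q (2 * n) : ℤ)
        = (shortCount q (2 * n + 1) : ℤ) + 2 * (shortCount q n : ℤ) := by
      exact_mod_cast congrArg (Nat.cast : ℕ → ℤ) this
    linarith
  refine ⟨shortCount_zero, ?_, ?_, hodd⟩
  · have h0 := hodd 0
    rw [show 2 * 0 = 0 from rfl, show 2 * 0 + 1 = 1 from rfl, shortCount_zero] at h0
    rw [h0]
    push_cast
    ring
  · intro n hn
    obtain ⟨m, rfl⟩ : ∃ m, n = m + 1 := ⟨n - 1, by omega⟩
    have e1 : shortCount q (2 * (m + 1)) = Nat.card {w : List (ZMod q) //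
        w.length = 2 * m + 3 ∧ NoBorderLE w (m + 1) ∧ w.head? = some a} := by
      rw [shortCount_eq_half]
      rw [show (2 * (m + 1) + 1) = 2 * m + 3 from by omega,
        show (2 * m + 3) / 2 = m + 1 from by omega]
    have e2 := card_insert (q := q) a (2 * m + 2) (m + 1) (m + 1)
      (by omega) le_rfl (by omega)
    rw [show (2 * m + 2 + 1) = 2 * m + 3 from by omega] at e2
    have e3 : shortCount q (2 * (m + 1) - 1) = Nat.card {w : List (ZMod q) //
        w.length = 2 * m + 2 ∧ NoBorderLE w (m + 1) ∧ w.head? = some a} := by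
      rw [show (2 * (m + 1) - 1) = 2 * m + 1 from by omega, shortCount_eq_half]
      rw [show (2 * m + 1 + 1) = 2 * m + 2 from by omega,
        show (2 * m + 2) / 2 = m + 1 from by omega]
    rw [e1, e2, e3, mul_comm]
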